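/- Let l be a prime power and let g(x) be the generator polynomial of a cyclic code C of length n over F_{l^2}. Then C is a Hermitian LCD code (i.e., LCD with respect to the Hermitian inner product) if and only if g(x) is conjugate-self-reciprocal (g(x) = g^⊥(x)) and every monic irreducible factor of g(x) has the same multiplicity in g(x) as in x^n − 1. -/

import Mathlib

open Polynomial Matrix Finset

variable {F : Type*} [Field F]

/-- The minimum (Hamming) distance of a linear code `C ⊆ F^ι`:
the least Hamming weight of a nonzero codeword. -/
noncomputable def minDist {ι : Type*} [Fintype ι] [DecidableEq F]
    (C : Submodule F (ι → F)) : ℕ :=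
  sInf {d | ∃ x ∈ C, x ≠ 0 ∧ hammingNorm x = d}

/-- The Euclidean dual of a linear code. -/
def dualCode {ι : Type*} [Fintype ι] (C : Submodule F (ι → F)) :
    Submodule F (ι → F) where
  carrier := {a | ∀ b ∈ C, ∑ i, a i * b i = 0}
  add_mem' := by
    intro a b ha hb c hc
    simp only [Pi.add_apply, add_mul, Finset.sum_add_distrib,
      ha c hc, hb c hc, add_zero]
  zero_mem' := by
    intro b hb
    simp
  smul_mem' := by
    intro r a ha b hb
    simp only [Pi.smul_apply, smul_eq_mul, mul_assoc, ← Finset.mul_sum,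
      ha b hb, mul_zero]

/-- `C` is a linear complementary dual (LCD) code. -/
def IsLCD {ι : Type*} [Fintype ι] (C : Submodule F (ι → F)) : Prop :=
  C ⊓ dualCode C = ⊥

/-- The Hermitian dual (with respect to `⟨a,b⟩ = ∑ i, a i * (b i)^l`) of a linear code. -/
def hermitianDual (l : ℕ) {ι : Type*} [Fintype ι] (C : Submodule F (ι → F)) :
    Submodule F (ι → F) where
  carrier := {a | ∀ b ∈ C, ∑ i, a i * (b i) ^ l = 0}
  add_mem' := by
    intro a b ha hb c hc
    simp only [Pi.add_apply, add_mul, Finset.sum_add_distrib,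
      ha c hc, hb c hc, add_zero]
  zero_mem' := by
    intro b hb
    simp
  smul_mem' := by
    intro r a ha b hb
    simp only [Pi.smul_apply, smul_eq_mul, mul_assoc, ← Finset.mul_sum,
      ha b hb, mul_zero]

/-- `C` is a Hermitian linear complementary dual code. -/
def IsHermitianLCD (l : ℕ) {ι : Type*} [Fintype ι] (C : Submodule F (ι → F)) : Prop :=
  C ⊓ hermitianDual l C = ⊥

/-- The matrix-product code `[C_1, …, C_s]·A`: all concatenated vectors
`(∑ i a_{i1} c_i, …, ∑ i a_{im} c_i)` with `c_i ∈ C_i`; coordinates are indexed by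
`Fin m × Fin n` (block `j`, position `t` within block). -/
def matrixProductCode {s m n : ℕ} (A : Matrix (Fin s) (Fin m) F)
    (C : Fin s → Submodule F (Fin n → F)) :
    Submodule F (Fin m × Fin n → F) where
  carrier := {x | ∃ c : Fin s → (Fin n → F), (∀ i, c i ∈ C i) ∧
    x = fun p => ∑ i, A i p.1 * c i p.2}
  add_mem' := by
    rintro x y ⟨c, hc, rfl⟩ ⟨d, hd, rfl⟩
    refine ⟨fun i => c i + d i, fun i => (C i).add_mem (hc i) (hd i), ?_⟩
    funext p
    simp [mul_add, Finset.sum_add_distrib]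
  zero_mem' := ⟨0, fun i => (C i).zero_mem, by funext p; simp⟩
  smul_mem' := by
    rintro r x ⟨c, hc, rfl⟩
    refine ⟨fun i => r • c i, fun i => (C i).smul_mem r (hc i), ?_⟩
    funext p
    simp [Finset.mul_sum, mul_left_comm]

/-- A matrix is non-singular by columns (NSC) if, for every `t ≤ s` and every strictly
increasing choice of `t` columns, the `t × t` submatrix formed from the first `t` rows
and those columns is non-singular. -/
def NSC {s m : ℕ} (A : Matrix (Fin s) (Fin m) F) : Prop :=
  ∀ (t : ℕ) (ht : t ≤ s) (j : Fin t → Fin m), StrictMono j →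
    (Matrix.of fun a b : Fin t => A (Fin.castLE ht a) (j b)).det ≠ 0

/-- The cyclic code of length `n` with generator polynomial `g` (a divisor of `Xⁿ - 1`),
viewed in `F^n` via the coefficient identification: a word `c` lies in the code iff the
associated polynomial `∑ cᵢ Xⁱ` (of degree `< n`) is a multiple of `g`. -/
def cyclicCode (n : ℕ) (g : F[X]) : Submodule F (Fin n → F) where
  carrier := {c | g ∣ ∑ i : Fin n, Polynomial.C (c i) * Polynomial.X ^ (i : ℕ)}
  add_mem' := by
    intro a b ha hb
    have h : (∑ i : Fin n, Polynomial.C ((a + b) i) * Polynomial.X ^ (i : ℕ))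
        = (∑ i : Fin n, Polynomial.C (a i) * Polynomial.X ^ (i : ℕ))
          + (∑ i : Fin n, Polynomial.C (b i) * Polynomial.X ^ (i : ℕ)) := by
      simp [add_mul, Finset.sum_add_distrib]
    simp only [Set.mem_setOf_eq] at ha hb ⊢
    rw [h]
    exact dvd_add ha hb
  zero_mem' := by simp
  smul_mem' := by
    intro r a ha
    have h : (∑ i : Fin n, Polynomial.C ((r • a) i) * Polynomial.X ^ (i : ℕ))
        = Polynomial.C r * ∑ i : Fin n, Polynomial.C (a i) * Polynomial.X ^ (i : ℕ) := by
      simp [Finset.mul_sum, mul_assoc]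
    simp only [Set.mem_setOf_eq] at ha ⊢
    rw [h]
    exact ha.mul_left _

/-- The conjugate-reciprocal polynomial
`f^⊥(x) = a₀^{-l} (a_k^l + a_{k-1}^l x + ⋯ + a₀^l x^k)` of `f = a₀ + a₁ x + ⋯ + a_k x^k`. -/
noncomputable def conjReciprocal (l : ℕ) (f : F[X]) : F[X] :=
  Polynomial.C ((f.coeff 0 ^ l)⁻¹) *
    ∑ i ∈ Finset.range (f.natDegree + 1),
      Polynomial.C (f.coeff (f.natDegree - i) ^ l) * Polynomial.X ^ i

section AuxPoly
variable {F : Type*} [Field F]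

/-- The polynomial attached to a word. -/
noncomputable def polyOf (n : ℕ) (a : Fin n → F) : F[X] :=
  ∑ i : Fin n, Polynomial.C (a i) * Polynomial.X ^ (i : ℕ)

lemma mem_cyclicCode {n : ℕ} {g : F[X]} {c : Fin n → F} :
    c ∈ cyclicCode n g ↔ g ∣ polyOf n c := Iff.rfl

lemma coeff_sum_CX {ι : Type*} (s : Finset ι) (c : ι → F) (e : ι → ℕ) (k : ℕ) :
    (∑ x ∈ s, Polynomial.C (c x) * Polynomial.X ^ (e x)).coeff k
      = ∑ x ∈ s, if e x = k then c x else 0 := by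
  rw [Polynomial.finset_sum_coeff]
  refine Finset.sum_congr rfl fun x _ => ?_
  simp only [Polynomial.coeff_C_mul, Polynomial.coeff_X_pow, mul_ite, mul_one, mul_zero]
  exact if_congr eq_comm rfl rfl

lemma coeff_polyOf {n : ℕ} (a : Fin n → F) (k : ℕ) :
    (polyOf n a).coeff k = if h : k < n then a ⟨k, h⟩ else 0 := by
  rw [polyOf, coeff_sum_CX]
  split
  · next h =>
    rw [Finset.sum_eq_single (⟨k, h⟩ : Fin n)]
    · simp
    · intro b _ hb
      exact if_neg (fun hh => hb (Fin.ext hh))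
    · intro habs; exact absurd (Finset.mem_univ _) habs
  · next h =>
    refine Finset.sum_eq_zero fun i _ => if_neg (fun hh : (i:ℕ) = k => h (hh ▸ i.isLt))

lemma polyOf_coeff {n : ℕ} (a : Fin n → F) (i : Fin n) :
    (polyOf n a).coeff i = a i := by
  rw [coeff_polyOf, dif_pos i.isLt]

lemma natDegree_polyOf_lt {n : ℕ} (hn : 0 < n) (a : Fin n → F) :
    (polyOf n a).natDegree < n := by
  have : (polyOf n a).natDegree ≤ n - 1 := by
    refine Polynomial.natDegree_sum_le_of_forall_le _ _ fun i _ => ?_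
    exact le_trans (Polynomial.natDegree_C_mul_X_pow_le _ _) (by omega)
  omega

lemma polyOf_coeffFn {n : ℕ} (P : F[X]) (h : P.natDegree < n) :
    polyOf n (fun i : Fin n => P.coeff i) = P := by
  ext k
  rw [coeff_polyOf]
  split
  · rfl
  · next hk => exact (Polynomial.coeff_eq_zero_of_natDegree_lt (by omega)).symm

lemma polyOf_eq_zero {n : ℕ} {a : Fin n → F} (h : polyOf n a = 0) : a = 0 := by
  funext i
  have := polyOf_coeff a i
  rw [h] at this
  simpa using this.symm

end AuxPoly

section AuxMod
variable {F : Type*} [Field F] {n : ℕ}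

lemma monicM (hn : 0 < n) : (Polynomial.X ^ n - 1 : F[X]).Monic := by
  have := Polynomial.monic_X_pow_sub_C (1 : F) hn.ne'
  simpa using this

lemma natDegreeM (hn : 0 < n) : (Polynomial.X ^ n - 1 : F[X]).natDegree = n := by
  have := Polynomial.natDegree_X_pow_sub_C (R := F) (n := n) (r := 1)
  simpa using this

lemma X_pow_mod (hn : 0 < n) (k : ℕ) :
    (Polynomial.X ^ k : F[X]) %ₘ (Polynomial.X ^ n - 1) = Polynomial.X ^ (k % n) := by
  induction k using Nat.strong_induction_on with
  | _ k ih =>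
    rcases lt_or_ge k n with h | h
    · rw [Nat.mod_eq_of_lt h]
      rw [(Polynomial.modByMonic_eq_self_iff (monicM hn)).2]
      rw [Polynomial.degree_X_pow]
      have h2 : (Polynomial.X ^ n - 1 : F[X]).degree = (n : ℕ) := by
        have := Polynomial.degree_X_pow_sub_C (R := F) hn (1 : F)
        simpa using this
      rw [h2]
      exact_mod_cast Nat.cast_lt.2 h
    · have hk : (Polynomial.X ^ k : F[X])
          = Polynomial.X ^ (k - n) * (Polynomial.X ^ n - 1) + Polynomial.X ^ (k - n) := by
        rw [mul_sub, mul_one, ← pow_add]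
        rw [Nat.sub_add_cancel h]
        ring
      rw [hk, Polynomial.add_modByMonic]
      have h0 : (Polynomial.X ^ (k - n) * (Polynomial.X ^ n - 1) : F[X])
          %ₘ (Polynomial.X ^ n - 1) = 0 := by
        rw [Polynomial.modByMonic_eq_zero_iff_dvd (monicM hn)]
        exact Dvd.intro_left _ rfl
      rw [h0, zero_add, ih (k - n) (by omega)]
      congr 1
      exact (Nat.mod_eq_sub_mod h).symm

lemma sum_CX_mod (hn : 0 < n) {ι : Type*} (s : Finset ι) (c : ι → F) (e : ι → ℕ) :
    (∑ x ∈ s, Polynomial.C (c x) * Polynomial.X ^ (e x)) %ₘ (Polynomial.X ^ n - 1)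
      = ∑ x ∈ s, Polynomial.C (c x) * Polynomial.X ^ (e x % n) := by
  have : ∀ P : F[X], P %ₘ (Polynomial.X ^ n - 1)
      = Polynomial.modByMonicHom (Polynomial.X ^ n - 1) P := fun P => rfl
  rw [this, map_sum]
  refine Finset.sum_congr rfl fun x _ => ?_
  rw [← this, ← Polynomial.smul_eq_C_mul, Polynomial.smul_modByMonic,
    X_pow_mod hn, Polynomial.smul_eq_C_mul]

end AuxMod
section AuxDual
variable {F : Type*} [Field F] {n : ℕ}
open Polynomial

lemma degreeM (hn : 0 < n) : (X ^ n - 1 : F[X]).degree = (n : ℕ) := by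
  have := Polynomial.degree_X_pow_sub_C (R := F) hn (1 : F)
  simpa using this

lemma natDegree_mod_lt (hn : 0 < n) (P : F[X]) :
    (P %ₘ (X ^ n - 1)).natDegree < n := by
  by_cases h : P %ₘ (X ^ n - 1) = 0
  · rw [h]; simpa using hn
  · rw [Polynomial.natDegree_lt_iff_degree_lt h]
    have := Polynomial.degree_modByMonic_lt P (monicM hn)
    rwa [degreeM hn] at this

lemma natDegree_reflect_le (d : ℕ) (γ : F[X]) (hd : γ.natDegree ≤ d) :
    (reflect d γ).natDegree ≤ d := by
  rw [Polynomial.natDegree_le_iff_coeff_eq_zero]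
  intro m hm
  rw [Polynomial.coeff_reflect, Polynomial.revAt_eq_self_of_lt hm]
  exact Polynomial.coeff_eq_zero_of_natDegree_lt (lt_of_le_of_lt hd hm)

lemma reflect_as_sum (γ : F[X]) :
    reflect γ.natDegree γ
      = ∑ k ∈ Finset.range (γ.natDegree + 1), C (γ.coeff (γ.natDegree - k)) * X ^ k := by
  ext t
  rw [Polynomial.coeff_reflect, coeff_sum_CX]
  rw [Finset.sum_ite_eq' (Finset.range (γ.natDegree + 1)) t
    (fun k => γ.coeff (γ.natDegree - k))]
  by_cases ht : t ≤ γ.natDegree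
  · rw [Polynomial.revAt_le ht, if_pos (Finset.mem_range.2 (by omega))]
  · rw [Polynomial.revAt_eq_self_of_lt (by omega), if_neg (by simp; omega)]
    exact Polynomial.coeff_eq_zero_of_natDegree_lt (by omega)

lemma pairing (hn : 0 < n) (a b : Fin n → F) :
    ∑ i, a i * b i
      = (polyOf n a * reflect (n - 1) (polyOf n b)).coeff (n - 1) := by
  rw [Polynomial.coeff_mul, Finset.Nat.sum_antidiagonal_eq_sum_range_succ_mk]
  have h1 : (n - 1).succ = n := by omega
  rw [h1, ← Fin.sum_univ_eq_sum_range
      (fun k => (polyOf n a).coeff k * (reflect (n - 1) (polyOf n b)).coeff (n - 1 - k)) n]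
  refine Finset.sum_congr rfl fun i _ => ?_
  have hi := i.isLt
  rw [polyOf_coeff, Polynomial.coeff_reflect]
  have h2 : (Polynomial.revAt (n - 1)) (n - 1 - (i : ℕ)) = (i : ℕ) := by
    rw [Polynomial.revAt_le (by omega)]
    omega
  rw [h2, polyOf_coeff]

lemma mem_dualCode {C : Submodule F (Fin n → F)} {a : Fin n → F} :
    a ∈ dualCode C ↔ ∀ b ∈ C, ∑ i, a i * b i = 0 := Iff.rfl

set_option maxHeartbeats 1000000 in
lemma dual_cyclicCode_iff (hn : 0 < n) {γ : F[X]} (hm : γ.Monic)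
    (hdvd : γ ∣ (X ^ n - 1 : F[X])) (a : Fin n → F) :
    a ∈ dualCode (cyclicCode n γ) ↔
      (X ^ n - 1 : F[X]) ∣ polyOf n a * reflect γ.natDegree γ := by
  have hMne : (X ^ n - 1 : F[X]) ≠ 0 := (monicM hn).ne_zero
  have hdn : γ.natDegree ≤ n := by
    have := Polynomial.natDegree_le_of_dvd hdvd hMne
    rwa [natDegreeM hn] at this
  constructor
  · intro ha
    -- orthogonality against shifted codewords
    have hb : ∀ j : ℕ,
        ∑ m ∈ Finset.range (γ.natDegree + 1),
          γ.coeff m * a ⟨(m + j) % n, Nat.mod_lt _ hn⟩ = 0 := by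
      intro j
      set b : Fin n → F := fun i => ((X ^ j * γ) %ₘ (X ^ n - 1)).coeff i with hbDef
      have hexp : (X ^ j * γ) %ₘ (X ^ n - 1)
          = ∑ m ∈ Finset.range (γ.natDegree + 1), C (γ.coeff m) * X ^ ((m + j) % n) := by
        have h3 : (X ^ j * γ : F[X])
            = ∑ m ∈ Finset.range (γ.natDegree + 1), C (γ.coeff m) * X ^ (m + j) := by
          conv_lhs => rw [γ.as_sum_range]
          rw [Finset.mul_sum]
          refine Finset.sum_congr rfl fun m _ => ?_
          rw [← Polynomial.C_mul_X_pow_eq_monomial, pow_add]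
          ring
        rw [h3, sum_CX_mod hn]
      have hmem : b ∈ cyclicCode n γ := by
        rw [mem_cyclicCode]
        have h4 : polyOf n b = (X ^ j * γ) %ₘ (X ^ n - 1) :=
          polyOf_coeffFn _ (natDegree_mod_lt hn _)
        rw [h4, Polynomial.modByMonic_eq_sub_mul_div _ (X ^ n - 1 : F[X])]
        exact dvd_sub (Dvd.intro_left _ rfl) (hdvd.mul_right _)
      have horth := ha b hmem
      have hbco : ∀ i : Fin n, b i
          = ∑ m ∈ Finset.range (γ.natDegree + 1),
              if ((m + j) % n : ℕ) = (i : ℕ) then γ.coeff m else 0 := by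
        intro i
        rw [hbDef]
        simp only
        rw [hexp, coeff_sum_CX]
      calc ∑ m ∈ Finset.range (γ.natDegree + 1),
            γ.coeff m * a ⟨(m + j) % n, Nat.mod_lt _ hn⟩
          = ∑ m ∈ Finset.range (γ.natDegree + 1), ∑ i : Fin n,
              (if i = (⟨(m + j) % n, Nat.mod_lt _ hn⟩ : Fin n)
                then a i * γ.coeff m else 0) := by
            refine Finset.sum_congr rfl fun m _ => ?_
            rw [Finset.sum_ite_eq' Finset.univ _ (fun i => a i * γ.coeff m),
              if_pos (Finset.mem_univ _)]
            ring
        _ = ∑ i : Fin n, a i * b i := by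
            rw [Finset.sum_comm]
            refine Finset.sum_congr rfl fun i _ => ?_
            rw [hbco i, Finset.mul_sum]
            refine Finset.sum_congr rfl fun m _ => ?_
            rw [mul_ite, mul_zero]
            refine if_congr ?_ rfl rfl
            rw [Fin.ext_iff]
            exact eq_comm
        _ = 0 := horth
    rw [← Polynomial.modByMonic_eq_zero_iff_dvd (monicM hn)]
    have hP : polyOf n a * reflect γ.natDegree γ
        = ∑ x ∈ Finset.univ ×ˢ Finset.range (γ.natDegree + 1),
            C (a x.1 * γ.coeff (γ.natDegree - x.2)) * X ^ ((x.1 : ℕ) + x.2) := by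
      calc polyOf n a * reflect γ.natDegree γ
          = ∑ i : Fin n, ∑ k ∈ Finset.range (γ.natDegree + 1),
              C (a i * γ.coeff (γ.natDegree - k)) * X ^ ((i : ℕ) + k) := by
            rw [polyOf, reflect_as_sum, Finset.sum_mul_sum]
            refine Finset.sum_congr rfl fun i _ => Finset.sum_congr rfl fun k _ => ?_
            rw [Polynomial.C_mul, pow_add]
            ring
        _ = _ := (Finset.sum_product' _ _ (fun i k =>
              C (a i * γ.coeff (γ.natDegree - k)) * X ^ ((i : ℕ) + k))).symm
    rw [hP, sum_CX_mod hn]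
    refine Polynomial.ext fun t => ?_
    rw [coeff_sum_CX, Polynomial.coeff_zero]
    by_cases ht : t < n
    · rw [Finset.sum_product' _ _ (fun (i : Fin n) (k : ℕ) =>
        if ((i : ℕ) + k) % n = t then a i * γ.coeff (γ.natDegree - k) else 0)]
      rw [Finset.sum_comm]
      have hinner : ∀ k ∈ Finset.range (γ.natDegree + 1),
          (∑ i : Fin n, if ((i : ℕ) + k) % n = t then a i * γ.coeff (γ.natDegree - k) else 0)
            = γ.coeff (γ.natDegree - k) * a ⟨(t + (n - k)) % n, Nat.mod_lt _ hn⟩ := by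
        intro k hk
        have hkd : k ≤ γ.natDegree := by
          have := Finset.mem_range.1 hk; omega
        set i₀ : Fin n := ⟨(t + (n - k)) % n, Nat.mod_lt _ hn⟩ with hi₀
        have hcond : ((i₀ : ℕ) + k) % n = t := by
          show ((t + (n - k)) % n + k) % n = t
          rw [Nat.mod_add_mod]
          rw [show t + (n - k) + k = t + n by omega]
          rw [Nat.add_mod_right, Nat.mod_eq_of_lt ht]
        rw [Finset.sum_eq_single_of_mem i₀ (Finset.mem_univ _)]
        · rw [if_pos hcond]; ring
        · intro i _ hi
          refine if_neg fun hc => hi ?_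
          have hieq : (i : ℕ) % n = (i₀ : ℕ) % n := by
            refine Nat.ModEq.add_right_cancel' k ?_
            show ((i : ℕ) + k) % n = ((i₀ : ℕ) + k) % n
            rw [hcond, hc]
          rw [Nat.mod_eq_of_lt i.isLt, Nat.mod_eq_of_lt i₀.isLt] at hieq
          exact Fin.ext hieq
      rw [Finset.sum_congr rfl hinner]
      have hrefl2 := Finset.sum_range_reflect
        (fun m => γ.coeff m * a ⟨(m + (t + (n - γ.natDegree))) % n, Nat.mod_lt _ hn⟩)
        (γ.natDegree + 1)
      calc ∑ k ∈ Finset.range (γ.natDegree + 1),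
            γ.coeff (γ.natDegree - k) * a ⟨(t + (n - k)) % n, Nat.mod_lt _ hn⟩
          = ∑ k ∈ Finset.range (γ.natDegree + 1),
              γ.coeff (γ.natDegree - k)
                * a ⟨((γ.natDegree - k) + (t + (n - γ.natDegree))) % n, Nat.mod_lt _ hn⟩ := by
            refine Finset.sum_congr rfl fun k hk => ?_
            have hkd : k ≤ γ.natDegree := by
              have := Finset.mem_range.1 hk; omega
            congr 1
            refine congrArg a (Fin.ext ?_)
            show (t + (n - k)) % n = ((γ.natDegree - k) + (t + (n - γ.natDegree))) % n
            congr 1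
            omega
        _ = ∑ m ∈ Finset.range (γ.natDegree + 1),
              γ.coeff m * a ⟨(m + (t + (n - γ.natDegree))) % n, Nat.mod_lt _ hn⟩ := hrefl2
        _ = 0 := hb (t + (n - γ.natDegree))
    · refine Finset.sum_eq_zero fun x _ => ?_
      refine if_neg fun hc => ?_
      have := Nat.mod_lt ((x.1 : ℕ) + x.2) hn
      omega
  · intro hM b hbmem
    obtain ⟨Q, hQ⟩ := (mem_cyclicCode).1 hbmem
    by_cases hB : polyOf n b = 0
    · have hb0 : b = 0 := polyOf_eq_zero hB
      rw [hb0]; simp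
    · have hγ0 : γ ≠ 0 := hm.ne_zero
      have hQ0 : Q ≠ 0 := by rintro rfl; rw [mul_zero] at hQ; exact hB hQ
      have hdB : (polyOf n b).natDegree < n := natDegree_polyOf_lt hn b
      have hdd : γ.natDegree + Q.natDegree < n := by
        rw [← Polynomial.natDegree_mul hγ0 hQ0, ← hQ]; exact hdB
      rw [pairing hn a b]
      have hrefl : reflect (n - 1) (polyOf n b)
          = reflect γ.natDegree γ * reflect (n - 1 - γ.natDegree) Q := by
        rw [hQ]
        have := Polynomial.reflect_mul γ Q (le_refl γ.natDegree)
          (by omega : Q.natDegree ≤ n - 1 - γ.natDegree)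
        rw [show γ.natDegree + (n - 1 - γ.natDegree) = n - 1 by omega] at this
        exact this
      rw [hrefl, ← mul_assoc]
      obtain ⟨S, hS⟩ := hM
      rw [hS, mul_assoc]
      by_cases hS0 : S = 0
      · rw [hS0]; simp
      · have h1 : ((X ^ n - 1 : F[X]) * S).natDegree ≤ (n - 1) + γ.natDegree := by
          rw [← hS]
          exact le_trans (Polynomial.natDegree_mul_le)
            (add_le_add (by have := natDegree_polyOf_lt hn a; omega)
              (natDegree_reflect_le γ.natDegree γ (le_refl γ.natDegree)))
        have h2 : ((X ^ n - 1 : F[X]) * S).natDegree = n + S.natDegree := by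
          rw [Polynomial.natDegree_mul hMne hS0, natDegreeM hn]
        have hd1 : n + S.natDegree ≤ (n - 1) + γ.natDegree := h2 ▸ h1
        have hT : (S * reflect (n - 1 - γ.natDegree) Q).natDegree < n - 1 := by
          refine lt_of_le_of_lt (Polynomial.natDegree_mul_le) ?_
          have := natDegree_reflect_le (n - 1 - γ.natDegree) Q (by omega)
          omega
        rw [sub_mul, one_mul, Polynomial.coeff_sub, mul_comm (X ^ n : F[X]),
          Polynomial.coeff_mul_X_pow', if_neg (by omega), zero_sub,
          Polynomial.coeff_eq_zero_of_natDegree_lt hT, neg_zero]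

end AuxDual
section AuxFrob
variable {F : Type*} [Field F] {n : ℕ}
open Polynomial

lemma map_polyOf (σ : F →+* F) (a : Fin n → F) :
    Polynomial.map σ (polyOf n a) = polyOf n (fun i => σ (a i)) := by
  rw [polyOf, polyOf, ← Polynomial.coe_mapRingHom, map_sum]
  refine Finset.sum_congr rfl fun i _ => ?_
  simp

lemma map_mem_cyclicCode (σ : F →+* F) {g : F[X]} {b : Fin n → F}
    (h : b ∈ cyclicCode n g) :
    (fun i => σ (b i)) ∈ cyclicCode n (g.map σ) := by
  rw [mem_cyclicCode] at h ⊢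
  obtain ⟨c, hc⟩ := h
  exact ⟨c.map σ, by rw [← map_polyOf, hc, Polynomial.map_mul]⟩

lemma mem_hermitianDual {l : ℕ} {C : Submodule F (Fin n → F)} {a : Fin n → F} :
    a ∈ hermitianDual l C ↔ ∀ b ∈ C, ∑ i, a i * (b i) ^ l = 0 := Iff.rfl

lemma herm_mem_iff {l : ℕ} (σ : F →+* F) (hσ : ∀ x, σ x = x ^ l)
    (hσ2 : ∀ x, σ (σ x) = x) {g : F[X]} (a : Fin n → F) :
    a ∈ hermitianDual l (cyclicCode n g) ↔ a ∈ dualCode (cyclicCode n (g.map σ)) := by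
  have hgg : (g.map σ).map σ = g := by
    rw [Polynomial.map_map]
    have : σ.comp σ = RingHom.id F := RingHom.ext hσ2
    rw [this, Polynomial.map_id]
  rw [mem_hermitianDual, mem_dualCode]
  constructor
  · intro ha c hc
    have hb : (fun i => σ (c i)) ∈ cyclicCode n g := by
      have := map_mem_cyclicCode σ hc
      rwa [hgg] at this
    have := ha _ hb
    calc ∑ i, a i * c i = ∑ i, a i * (σ (c i)) ^ l := by
          refine Finset.sum_congr rfl fun i _ => ?_
          rw [← hσ, hσ2]
      _ = 0 := this
  · intro ha b hb
    have hc := map_mem_cyclicCode σ hb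
    have := ha _ hc
    calc ∑ i, a i * (b i) ^ l = ∑ i, a i * σ (b i) := by
          refine Finset.sum_congr rfl fun i _ => ?_
          rw [hσ]
      _ = 0 := this

lemma exists_sigma [Fintype F] {l : ℕ} (hl : IsPrimePow l)
    (hcard : Fintype.card F = l ^ 2) :
    ∃ σ : F →+* F, (∀ x, σ x = x ^ l) ∧ (∀ x, σ (σ x) = x) := by
  obtain ⟨p, k, hp, hk, hpk⟩ := hl
  have hp' : Nat.Prime p := Nat.prime_iff.2 hp
  obtain ⟨m, hq, hcard'⟩ := FiniteField.card F (ringChar F)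
  have hqp : ringChar F = p := by
    have h1 : ringChar F ∣ l ^ 2 := by
      rw [← hcard, hcard']
      exact dvd_pow_self _ (by positivity)
    have h2 : ringChar F ∣ l := hq.dvd_of_dvd_pow h1
    have h3 : ringChar F ∣ p := hq.dvd_of_dvd_pow (hpk ▸ h2)
    exact (Nat.prime_dvd_prime_iff_eq hq hp').1 h3
  haveI : CharP F p := hqp ▸ ringChar.charP F
  haveI : Fact (Nat.Prime p) := ⟨hp'⟩
  refine ⟨iterateFrobenius F p k, fun x => by rw [iterateFrobenius_def, hpk], fun x => ?_⟩
  rw [iterateFrobenius_def, iterateFrobenius_def, ← pow_mul, hpk,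
    show l * l = Fintype.card F by rw [hcard]; ring]
  exact FiniteField.pow_card x

end AuxFrob
section AuxAlg
variable {F : Type*} [Field F] {n : ℕ}
open Polynomial

lemma coeff_zero_ne_zero (hn : 0 < n) {g : F[X]} (hgdvd : g ∣ (X ^ n - 1 : F[X])) :
    g.coeff 0 ≠ 0 := by
  obtain ⟨u, hu⟩ := hgdvd
  intro h0
  have h1 : (X ^ n - 1 : F[X]).coeff 0 = 0 := by
    rw [hu, Polynomial.mul_coeff_zero, h0, zero_mul]
  rw [Polynomial.coeff_sub, Polynomial.coeff_X_pow, Polynomial.coeff_one] at h1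
  rw [if_neg (by omega)] at h1
  simp at h1

lemma conjReciprocal_eq {l : ℕ} (σ : F →+* F) (hσ : ∀ x, σ x = x ^ l) (f : F[X]) :
    conjReciprocal l f = C ((σ (f.coeff 0))⁻¹) * Polynomial.map σ f.reverse := by
  have hrev : f.reverse = reflect f.natDegree f := rfl
  rw [conjReciprocal]
  simp only [← hσ]
  congr 1
  rw [hrev, reflect_as_sum, ← Polynomial.coe_mapRingHom, map_sum]
  refine Finset.sum_congr rfl fun k _ => ?_
  simp

lemma natDegree_rev_map (σ : F →+* F) {f : F[X]} (hf0 : f.coeff 0 ≠ 0) :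
    (Polynomial.map σ f.reverse).natDegree = f.natDegree := by
  rw [Polynomial.natDegree_map, Polynomial.reverse_natDegree,
    (Polynomial.natTrailingDegree_eq_zero).2 (Or.inr hf0), Nat.sub_zero]

lemma leadingCoeff_rev_map (σ : F →+* F) {f : F[X]} (hf0 : f.coeff 0 ≠ 0) :
    (Polynomial.map σ f.reverse).leadingCoeff = σ (f.coeff 0) := by
  rw [Polynomial.leadingCoeff_map, Polynomial.reverse_leadingCoeff]
  have h1 : f.natTrailingDegree = 0 :=
    (Polynomial.natTrailingDegree_eq_zero).2 (Or.inr hf0)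
  show σ (f.coeff f.natTrailingDegree) = σ (f.coeff 0)
  rw [h1]

lemma sigma_ne_zero (σ : F →+* F) {x : F} (hx : x ≠ 0) : σ x ≠ 0 :=
  fun h => hx (σ.injective (by rw [h, map_zero]))

lemma conjR_monic {l : ℕ} (σ : F →+* F) (hσ : ∀ x, σ x = x ^ l)
    {f : F[X]} (hf0 : f.coeff 0 ≠ 0) :
    (conjReciprocal l f).Monic ∧ (conjReciprocal l f).natDegree = f.natDegree := by
  have hσ0 : σ (f.coeff 0) ≠ 0 := sigma_ne_zero σ hf0
  rw [conjReciprocal_eq σ hσ]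
  constructor
  · show Polynomial.leadingCoeff _ = 1
    rw [Polynomial.leadingCoeff_mul, Polynomial.leadingCoeff_C,
      leadingCoeff_rev_map σ hf0, inv_mul_cancel₀ hσ0]
  · rw [Polynomial.natDegree_C_mul (inv_ne_zero hσ0), natDegree_rev_map σ hf0]

lemma rev_map_M (σ : F →+* F) (hn : 0 < n) :
    Polynomial.map σ ((X ^ n - 1 : F[X]).reverse) = -(X ^ n - 1) := by
  have h1 : (X ^ n - 1 : F[X]).reverse = 1 - X ^ n := by
    show reflect (X ^ n - 1 : F[X]).natDegree (X ^ n - 1) = 1 - X ^ n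
    rw [natDegreeM hn]
    have h2 : (X ^ n - 1 : F[X]) = C 1 * X ^ n + C (-1) * X ^ 0 := by
      rw [Polynomial.C_1, Polynomial.C_neg, Polynomial.C_1, pow_zero]
      ring
    rw [h2, Polynomial.reflect_add, Polynomial.reflect_C_mul_X_pow,
      Polynomial.reflect_C_mul_X_pow]
    rw [Polynomial.revAt_le (le_refl n), Polynomial.revAt_le (Nat.zero_le n)]
    rw [Nat.sub_self, Nat.sub_zero, pow_zero, Polynomial.C_1, Polynomial.C_neg,
      Polynomial.C_1]
    ring
  rw [h1]
  rw [Polynomial.map_sub, Polynomial.map_one, Polynomial.map_pow, Polynomial.map_X]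
  ring

set_option maxHeartbeats 800000 in
lemma Qprime_iff_coprime (hn : 0 < n) {g h G : F[X]} (hgh : g * h = (X ^ n - 1 : F[X]))
    (hg0 : g ≠ 0) (hh0 : h ≠ 0) :
    (∀ A : F[X], A.natDegree < n → g ∣ A → (X ^ n - 1 : F[X]) ∣ A * G → A = 0)
      ↔ IsCoprime h G := by
  classical
  have hdeg : g.natDegree + h.natDegree = n := by
    rw [← Polynomial.natDegree_mul hg0 hh0, hgh, natDegreeM hn]
  constructor
  · intro hQ
    by_contra hnc
    set w := EuclideanDomain.gcd h G with hw
    have hwu : ¬ IsUnit w := fun hu => hnc (EuclideanDomain.gcd_isUnit_iff.1 hu)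
    have hw0 : w ≠ 0 := fun h0 => hh0 ((EuclideanDomain.gcd_eq_zero_iff.1 (hw ▸ h0)).1)
    obtain ⟨B, hB⟩ := EuclideanDomain.gcd_dvd_left h G
    obtain ⟨v, hv⟩ := EuclideanDomain.gcd_dvd_right h G
    have hB0 : B ≠ 0 := fun h0 => hh0 (by rw [hB, h0, mul_zero])
    have hwdeg : 1 ≤ w.natDegree := by
      by_contra hd
      exact hwu (by
        have : w.natDegree = 0 := by omega
        obtain ⟨c, hc⟩ := Polynomial.natDegree_eq_zero.1 this
        have hc0 : c ≠ 0 := fun h0 => hw0 (by rw [← hc, h0, Polynomial.C_0])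
        rw [← hc]
        exact Polynomial.isUnit_C.2 (isUnit_iff_ne_zero.2 hc0))
    have hBdeg : B.natDegree < h.natDegree := by
      have := Polynomial.natDegree_mul hw0 hB0
      rw [← hB] at this
      omega
    have hA0 : g * B ≠ 0 := mul_ne_zero hg0 hB0
    have := hQ (g * B)
      (by rw [Polynomial.natDegree_mul hg0 hB0]; omega)
      (Dvd.intro _ rfl)
      (by
        refine ⟨v, ?_⟩
        rw [← hgh]
        linear_combination g * B * hv - g * v * hB)
    exact hA0 this
  · intro hco A hdeg' hgA hMA
    obtain ⟨B, hB⟩ := hgA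
    by_cases hB0 : B = 0
    · rw [hB, hB0, mul_zero]
    · exfalso
      have hg0' : g ≠ 0 := hg0
      have hdvd2 : h ∣ B * G := by
        have h1 : g * h ∣ g * (B * G) := by
          rw [hgh]
          have := hMA
          rw [hB] at this
          rwa [mul_assoc] at this
        exact (mul_dvd_mul_iff_left hg0').1 h1
      have hhB : h ∣ B := hco.dvd_of_dvd_mul_right hdvd2
      have h2 : h.natDegree ≤ B.natDegree := Polynomial.natDegree_le_of_dvd hhB hB0
      have h3 : A.natDegree = g.natDegree + B.natDegree := by
        rw [hB, Polynomial.natDegree_mul hg0 hB0]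
      omega

end AuxAlg
section AuxFinal
variable {F : Type*} [Field F] {n : ℕ}
open Polynomial

set_option maxHeartbeats 800000 in
lemma coprime_iff_conditions {l : ℕ} (σ : F →+* F) (hσ : ∀ x, σ x = x ^ l)
    (hn : 0 < n) {g h : F[X]} (hg : g.Monic) (hgh : g * h = (X ^ n - 1 : F[X])) :
    IsCoprime h (Polynomial.map σ g.reverse) ↔
      (g = conjReciprocal l g ∧
        ∀ p : F[X], p.Monic → Irreducible p → p ∣ g →
          ∀ e : ℕ, p ^ e ∣ g ↔ p ^ e ∣ (X ^ n - 1 : F[X])) := by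
  classical
  have hg0 : g ≠ 0 := hg.ne_zero
  have hMne : (X ^ n - 1 : F[X]) ≠ 0 := (monicM hn).ne_zero
  have hh0 : h ≠ 0 := fun h0 => hMne (by rw [← hgh, h0, mul_zero])
  have hgdvd : g ∣ (X ^ n - 1 : F[X]) := ⟨h, hgh.symm⟩
  have hc0 : g.coeff 0 ≠ 0 := coeff_zero_ne_zero hn hgdvd
  have hσ0 : σ (g.coeff 0) ≠ 0 := sigma_ne_zero σ hc0
  have hassoc : Polynomial.map σ g.reverse = C (σ (g.coeff 0)) * conjReciprocal l g := by
    rw [conjReciprocal_eq σ hσ, ← mul_assoc, ← Polynomial.C_mul,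
      mul_inv_cancel₀ hσ0, Polynomial.C_1, one_mul]
  constructor
  · intro hco
    -- Step 1 : g = conjReciprocal l g
    have hrevmul : Polynomial.map σ ((g * h).reverse)
        = Polynomial.map σ g.reverse * Polynomial.map σ h.reverse := by
      rw [Polynomial.reverse_mul_of_domain, Polynomial.map_mul]
    have hMrev : Polynomial.map σ ((g * h).reverse) = -(X ^ n - 1) := by
      rw [hgh, rev_map_M σ hn]
    have hdvd1 : Polynomial.map σ g.reverse ∣ g * h := by
      refine ⟨-(Polynomial.map σ h.reverse), ?_⟩
      have := hMrev
      rw [hrevmul] at this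
      rw [← hgh] at this
      linear_combination this
    have hGg : Polynomial.map σ g.reverse ∣ g := hco.symm.dvd_of_dvd_mul_right hdvd1
    have hcdvd : conjReciprocal l g ∣ g := by
      refine Dvd.dvd.trans ?_ hGg
      rw [hassoc]
      exact Dvd.intro_left _ rfl
    obtain ⟨hcm, hcd⟩ := conjR_monic σ hσ hc0
    have heq : g = conjReciprocal l g := by
      obtain ⟨c, hc⟩ := hcdvd
      have hcne : c ≠ 0 := fun h0 => hg0 (by rw [hc, h0, mul_zero])
      have hdeg : g.natDegree = (conjReciprocal l g).natDegree + c.natDegree := by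
        conv_lhs => rw [hc]
        rw [Polynomial.natDegree_mul hcm.ne_zero hcne]
      have hcdeg : c.natDegree = 0 := by omega
      obtain ⟨c0, hc0'⟩ := Polynomial.natDegree_eq_zero.1 hcdeg
      have this : c0 = 1 := by
        have h5 := hg.leadingCoeff
        rw [hc, Polynomial.leadingCoeff_mul, hcm.leadingCoeff, ← hc0',
          Polynomial.leadingCoeff_C, one_mul] at h5
        exact h5
      conv_lhs => rw [hc]
      rw [← hc0', this, Polynomial.C_1, mul_one]
    refine ⟨heq, fun p hpm hpi hpg e => ?_⟩
    constructor
    · exact fun hpe => hpe.trans hgdvd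
    · intro hpeM
      have hph : ¬ p ∣ h := by
        intro hph
        refine hpi.not_isUnit (hco.isUnit_of_dvd' hph ?_)
        rw [hassoc, ← heq]
        exact hpg.mul_left _
      have hprime : Prime p := hpi.prime
      rw [← hgh] at hpeM
      exact hprime.pow_dvd_of_dvd_mul_right e hph hpeM
  · rintro ⟨heq, hmult⟩
    rw [hassoc, ← heq]
    rw [isCoprime_mul_unit_left_right (Polynomial.isUnit_C.2 (isUnit_iff_ne_zero.2 hσ0)) h g]
    by_contra hnc
    set w := EuclideanDomain.gcd h g with hwdef
    have hwu : ¬ IsUnit w := fun hu => hnc (EuclideanDomain.gcd_isUnit_iff.1 hu)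
    have hw0 : w ≠ 0 := fun h0 => hh0 ((EuclideanDomain.gcd_eq_zero_iff.1 (hwdef ▸ h0)).1)
    obtain ⟨p, hpi, hpw⟩ := WfDvdMonoid.exists_irreducible_factor hwu hw0
    have hp0 : p ≠ 0 := hpi.ne_zero
    have hph : p ∣ h := hpw.trans (EuclideanDomain.gcd_dvd_left h g)
    have hpg : p ∣ g := hpw.trans (EuclideanDomain.gcd_dvd_right h g)
    -- normalize p
    set q := p * C p.leadingCoeff⁻¹ with hqdef
    have hqm : q.Monic := Polynomial.monic_mul_leadingCoeff_inv hp0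
    have hassoc2 : Associated p q := by
      have hu : IsUnit (C p.leadingCoeff⁻¹) :=
        Polynomial.isUnit_C.2 (isUnit_iff_ne_zero.2 (inv_ne_zero
          (Polynomial.leadingCoeff_ne_zero.2 hp0)))
      exact ⟨hu.unit, by rw [hu.unit_spec]⟩
    have hqi : Irreducible q := hassoc2.irreducible hpi
    have hqh : q ∣ h := (hassoc2.symm.dvd).trans hph
    have hqg : q ∣ g := (hassoc2.symm.dvd).trans hpg
    have hqdeg : 1 ≤ q.natDegree := by
      by_contra hd
      have h0 : q.natDegree = 0 := by omega
      exact hqi.not_isUnit (by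
        rw [Polynomial.eq_one_of_monic_natDegree_zero hqm h0]
        exact isUnit_one)
    -- maximal power
    set e := Nat.findGreatest (fun e => q ^ e ∣ g) g.natDegree with hedef
    have he : q ^ e ∣ g :=
      Nat.findGreatest_spec (P := fun e => q ^ e ∣ g) (Nat.zero_le _) (by simp)
    have hesucc : ¬ q ^ (e + 1) ∣ g := by
      intro hsucc
      have hdegle : (e + 1) * q.natDegree ≤ g.natDegree := by
        have := Polynomial.natDegree_le_of_dvd hsucc hg0
        rwa [Polynomial.natDegree_pow] at this
      have hle : e + 1 ≤ g.natDegree := by nlinarith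
      have hgt : e < e + 1 := Nat.lt_succ_self e
      exact Nat.findGreatest_is_greatest (P := fun e => q ^ e ∣ g) hgt hle hsucc
    have hpow : q ^ (e + 1) ∣ (X ^ n - 1 : F[X]) := by
      rw [← hgh, pow_succ]
      exact mul_dvd_mul he hqh
    exact hesucc ((hmult q hqm hqi hqg (e + 1)).2 hpow)

end AuxFinal
theorem stmt8 {F : Type*} [Field F] [Fintype F] {l : ℕ} (hl : IsPrimePow l)
    (hcard : Fintype.card F = l ^ 2) {n : ℕ} (hn : 0 < n)
    (g : F[X]) (hg : g.Monic) (hgdvd : g ∣ (Polynomial.X ^ n - 1 : F[X])) :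
    IsHermitianLCD l (cyclicCode n g) ↔
      (g = conjReciprocal l g ∧
        ∀ p : F[X], p.Monic → Irreducible p → p ∣ g →
          ∀ e : ℕ, p ^ e ∣ g ↔ p ^ e ∣ (Polynomial.X ^ n - 1 : F[X])) := by
  obtain ⟨σ, hσ, hσ2⟩ := exists_sigma hl hcard
  obtain ⟨h, hgh⟩ := hgdvd
  have hgh' : g * h = X ^ n - 1 := hgh.symm
  have hg0 : g ≠ 0 := hg.ne_zero
  have hMne : (X ^ n - 1 : F[X]) ≠ 0 := (monicM hn).ne_zero
  have hh0 : h ≠ 0 := fun h0 => hMne (by rw [← hgh', h0, mul_zero])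
  have hrefl : Polynomial.reflect (Polynomial.map σ g).natDegree (Polynomial.map σ g)
      = Polynomial.map σ g.reverse := by
    rw [Polynomial.natDegree_map, Polynomial.reflect_map]
    rfl
  have hmapdvd : Polynomial.map σ g ∣ (X ^ n - 1 : F[X]) := by
    have h1 : Polynomial.map σ (X ^ n - 1 : F[X]) = X ^ n - 1 := by
      rw [Polynomial.map_sub, Polynomial.map_one, Polynomial.map_pow, Polynomial.map_X]
    rw [← h1]
    exact ⟨h.map σ, by rw [← Polynomial.map_mul, ← hgh']⟩
  have key1 : IsHermitianLCD l (cyclicCode n g) ↔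
      ∀ A : F[X], A.natDegree < n → g ∣ A →
        (X ^ n - 1 : F[X]) ∣ A * Polynomial.map σ g.reverse → A = 0 := by
    unfold IsHermitianLCD
    rw [Submodule.eq_bot_iff]
    constructor
    · intro H A hdeg hgA hMA
      have ha : (fun i : Fin n => A.coeff i) = 0 := by
        refine H _ (Submodule.mem_inf.2 ⟨?_, ?_⟩)
        · rw [mem_cyclicCode, polyOf_coeffFn A hdeg]
          exact hgA
        · rw [herm_mem_iff σ hσ hσ2, dual_cyclicCode_iff hn (hg.map σ) hmapdvd, hrefl,
            polyOf_coeffFn A hdeg]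
          exact hMA
      have h2 : polyOf n (fun i : Fin n => A.coeff i) = A := polyOf_coeffFn A hdeg
      rw [ha] at h2
      rw [← h2]
      simp [polyOf]
    · intro H a ha
      obtain ⟨ha1, ha2⟩ := Submodule.mem_inf.1 ha
      rw [herm_mem_iff σ hσ hσ2, dual_cyclicCode_iff hn (hg.map σ) hmapdvd, hrefl] at ha2
      exact polyOf_eq_zero
        (H (polyOf n a) (natDegree_polyOf_lt hn a) (mem_cyclicCode.1 ha1) ha2)
  rw [key1, Qprime_iff_coprime hn hgh' hg0 hh0,
    coprime_iff_conditions σ hσ hn hg hgh']
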